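/- Let k be an algebraically closed field of characteristic p > 0. For every sequence (f_n)_{n≥0} where each f_n is a unit of the subring k((t))^{p^n} ⊆ k((t)), there exist a digit sequence (a_n) and units u_n of k((t))^{p^n} such that f_n = u_n · t^{a_n p^n} · u_{n+1}⁻¹ in k((t)) for all n ≥ 0. (Every stratified line bundle on k((t)) is isomorphic to O(α) for some p-adic integer α.) -/

import Mathlib

/-- The element `t` of `k((t))`. -/
noncomputable def tt (k : Type*) [Field k] : LaurentSeries k := HahnSeries.single 1 1

/-- `f ∈ k((t))` lies in the subring `k((t))^{pⁿ}` of `pⁿ`-th powers: since `k` is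
perfect, this means exactly that the support of `f` consists of multiples of `pⁿ`. -/
def InLaurentSeriesPow (k : Type*) [Field k] (p n : ℕ) (f : LaurentSeries k) : Prop :=
  ∀ i ∈ f.support, ((p : ℤ) ^ n) ∣ i

/-- `f` is a unit of the subring `k((t))^{pⁿ}`. -/
def IsUnitLaurentSeriesPow (k : Type*) [Field k] (p n : ℕ) (f : LaurentSeries k) : Prop :=
  InLaurentSeriesPow k p n f ∧ ∃ g, InLaurentSeriesPow k p n g ∧ f * g = 1

open HahnSeries

namespace SLB

variable {k : Type*} [Field k]

/-! ### Basic closure properties of the subring of `pⁿ`-th powers -/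

lemma inPow_mul {p n : ℕ} {x y : LaurentSeries k} (hx : InLaurentSeriesPow k p n x)
    (hy : InLaurentSeriesPow k p n y) : InLaurentSeriesPow k p n (x * y) := by
  intro i hi
  obtain ⟨a, ha, b, hb, rfl⟩ := Set.mem_add.mp (support_mul_subset hi)
  exact dvd_add (hx a ha) (hy b hb)

lemma inPow_single {p n : ℕ} {a : ℤ} (c : k) (ha : ((p : ℤ)) ^ n ∣ a) :
    InLaurentSeriesPow k p n (HahnSeries.single a c) := by
  intro i hi
  have := support_single_subset hi
  simp only [Set.mem_singleton_iff] at this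
  subst this; exact ha

lemma inPow_one {p n : ℕ} : InLaurentSeriesPow k p n (1 : LaurentSeries k) := by
  intro i hi
  rw [mem_support, coeff_one] at hi
  by_cases h : i = 0
  · subst h; exact dvd_zero _
  · simp [h] at hi

lemma inPow_mono {p n m : ℕ} (hnm : n ≤ m) {x : LaurentSeries k}
    (hx : InLaurentSeriesPow k p m x) : InLaurentSeriesPow k p n x := fun i hi =>
  dvd_trans (pow_dvd_pow _ hnm) (hx i hi)

lemma order_dvd_of_inPow {p n : ℕ} {x : LaurentSeries k} (hx0 : x ≠ 0)
    (hx : InLaurentSeriesPow k p n x) : ((p : ℤ)) ^ n ∣ x.order :=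
  hx _ ((mem_support _ _).mpr (coeff_order_eq_zero.not.mpr hx0))

/-- The ring embedding `t ↦ t^d` of Laurent series, for `d > 0`. -/
noncomputable def emb (d : ℤ) (hd : 0 < d) : LaurentSeries k →+* LaurentSeries k :=
  HahnSeries.embDomainRingHom
    { toFun := fun i => d * i
      map_zero' := mul_zero d
      map_add' := fun a b => mul_add d a b }
    (fun a b h => by
      exact mul_left_cancel₀ hd.ne' h)
    (fun a b => by
      simpa using (mul_le_mul_iff_of_pos_left hd))

lemma emb_coeff_mul {d : ℤ} (hd : 0 < d) (x : LaurentSeries k) (i : ℤ) :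
    (emb d hd x).coeff (d * i) = x.coeff i := by
  exact embDomain_coeff

lemma emb_coeff_of_not_dvd {d : ℤ} (hd : 0 < d) (x : LaurentSeries k) {j : ℤ}
    (hj : ¬ d ∣ j) : (emb d hd x).coeff j = 0 := by
  refine embDomain_notin_range ?_
  rintro ⟨i, rfl⟩
  exact hj ⟨i, rfl⟩

lemma inPow_emb {p n : ℕ} (hd : 0 < ((p : ℤ)) ^ n) (x : LaurentSeries k) :
    InLaurentSeriesPow k p n (emb ((p : ℤ) ^ n) hd x) := by
  intro i hi
  obtain ⟨a, _, rfl⟩ := support_embDomain_subset hi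
  exact ⟨a, rfl⟩

/-- Inverses of nonzero elements of the subring stay in the subring. -/
lemma inPow_inv {p n : ℕ} (hp : 0 < p) {x : LaurentSeries k} (hx0 : x ≠ 0)
    (hx : InLaurentSeriesPow k p n x) : InLaurentSeriesPow k p n x⁻¹ := by
  set d : ℤ := (p : ℤ) ^ n with hd
  have hdpos : 0 < d := by positivity
  set z : LaurentSeries k := HahnSeries.single (-x.order) (1 : k) * x with hzdef
  have hz0 : z ≠ 0 := mul_ne_zero (single_ne_zero one_ne_zero) hx0
  have hzord : z.order = 0 := by
    rw [hzdef, order_mul (single_ne_zero one_ne_zero) hx0, order_single one_ne_zero,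
      neg_add_cancel]
  have hxorddvd : d ∣ x.order := order_dvd_of_inPow hx0 hx
  have hzpow : InLaurentSeriesPow k p n z :=
    inPow_mul (inPow_single _ (Dvd.dvd.neg_right hxorddvd)) hx
  set g : LaurentSeries k :=
    ((PowerSeries.mk fun i => z.coeff (d * i) : PowerSeries k) : LaurentSeries k) with hgdef
  have hg : emb d hdpos g = z := by
    ext j
    by_cases hj : d ∣ j
    · obtain ⟨i, rfl⟩ := hj
      rw [emb_coeff_mul]
      rw [hgdef, PowerSeries.coeff_coe]
      rcases lt_or_ge i 0 with hi | hi
      · rw [if_pos hi]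
        have : d * i < z.order := by
          rw [hzord]; exact mul_neg_of_pos_of_neg hdpos hi
        exact (coeff_eq_zero_of_lt_order this).symm
      · rw [if_neg (not_lt.mpr hi), PowerSeries.coeff_mk]
        congr 1
        rw [Int.natAbs_of_nonneg hi]
    · rw [emb_coeff_of_not_dvd hdpos _ hj]
      by_contra h
      exact hj (hzpow j ((mem_support _ _).mpr fun hc => h hc.symm))
  have hgne : g ≠ 0 := by
    intro h
    rw [h, map_zero] at hg
    exact hz0 hg.symm
  have hzinv : z⁻¹ = emb d hdpos g⁻¹ := by
    have h1 : emb d hdpos g⁻¹ * z = 1 := by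
      rw [← hg, ← map_mul, inv_mul_cancel₀ hgne, map_one]
    exact (eq_inv_of_mul_eq_one_left h1).symm
  have hxinv : x⁻¹ = z⁻¹ * HahnSeries.single (-x.order) (1 : k) := by
    rw [hzdef, mul_inv_rev]
    rw [mul_assoc, inv_mul_cancel₀ (single_ne_zero (one_ne_zero (α := k))), mul_one]
  rw [hxinv, hzinv]
  exact inPow_mul (inPow_emb hdpos _) (inPow_single _ (Dvd.dvd.neg_right hxorddvd))

/-! ### leading coefficient of products -/

lemma lc_mul {x y : LaurentSeries k} (hx : x ≠ 0) (hy : y ≠ 0) :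
    (x * y).leadingCoeff = x.leadingCoeff * y.leadingCoeff := by
  rw [leadingCoeff_eq, order_mul hx hy, coeff_mul_order_add_order]

/-- If `x` has no coefficients below `A` and `y` none below `B`, then `x * y`
has none below `A + B`. -/
lemma coeff_mul_vanish {x y : LaurentSeries k} {A B : ℤ}
    (hx : ∀ j < A, x.coeff j = 0) (hy : ∀ j < B, y.coeff j = 0) :
    ∀ i < A + B, (x * y).coeff i = 0 := by
  intro i hi
  by_contra h
  obtain ⟨a, ha, b, hb, rfl⟩ := Set.mem_add.mp
    (support_mul_subset ((mem_support _ _).mpr h))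
  have hA : A ≤ a := not_lt.mp fun hc => ha (hx a hc)
  have hB : B ≤ b := not_lt.mp fun hc => hb (hy b hc)
  linarith

/-! ### The construction -/

variable (f : ℕ → LaurentSeries k)

/-- Partial products `g n = f 0 * ⋯ * f (n-1)`. -/
noncomputable def gS : ℕ → LaurentSeries k
  | 0 => 1
  | n + 1 => gS n * f n

/-- Normalization of `g n`: monic with order `0`. -/
noncomputable def wS (n : ℕ) : LaurentSeries k :=
  HahnSeries.single (-(gS f n).order) ((gS f n).leadingCoeff)⁻¹ * gS f n

/-- The quotient `w (n+1) / w n`, written without inverses. -/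
noncomputable def qS (n : ℕ) : LaurentSeries k :=
  HahnSeries.single (-(f n).order)
      ((gS f n).leadingCoeff * ((gS f (n + 1)).leadingCoeff)⁻¹) * f n

/-- The limit `u₀` of the `w n`. -/
noncomputable def u0 : LaurentSeries k :=
  ((PowerSeries.mk fun i => (wS f (i + 1)).coeff (i : ℤ) : PowerSeries k) : LaurentSeries k)

variable {f}

section Main

variable (hf0 : ∀ n, f n ≠ 0)
include hf0

lemma gS_ne (n : ℕ) : gS f n ≠ 0 := by
  induction n with
  | zero => exact one_ne_zero
  | succ n ih => exact mul_ne_zero ih (hf0 n)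

lemma lc_ne (n : ℕ) : (gS f n).leadingCoeff ≠ 0 :=
  leadingCoeff_ne_zero.mpr (gS_ne hf0 n)

lemma wS_ne (n : ℕ) : wS f n ≠ 0 :=
  mul_ne_zero (single_ne_zero (inv_ne_zero (lc_ne hf0 n))) (gS_ne hf0 n)

lemma wS_order (n : ℕ) : (wS f n).order = 0 := by
  rw [wS, order_mul (single_ne_zero (inv_ne_zero (lc_ne hf0 n))) (gS_ne hf0 n),
    order_single (inv_ne_zero (lc_ne hf0 n)), neg_add_cancel]

lemma wS_lc (n : ℕ) : (wS f n).leadingCoeff = 1 := by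
  rw [wS, lc_mul (single_ne_zero (inv_ne_zero (lc_ne hf0 n))) (gS_ne hf0 n),
    leadingCoeff_of_single, inv_mul_cancel₀ (lc_ne hf0 n)]

lemma wS_coeff_zero (n : ℕ) : (wS f n).coeff 0 = 1 := by
  have := wS_lc hf0 n
  rwa [leadingCoeff_eq, wS_order hf0 n] at this

lemma wS_coeff_neg (n : ℕ) {i : ℤ} (hi : i < 0) : (wS f n).coeff i = 0 :=
  coeff_eq_zero_of_lt_order (by rw [wS_order hf0 n]; exact hi)

lemma gS_order_succ (n : ℕ) : (gS f (n + 1)).order = (gS f n).order + (f n).order := by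
  rw [show gS f (n + 1) = gS f n * f n from rfl, order_mul (gS_ne hf0 n) (hf0 n)]

lemma gS_lc_succ (n : ℕ) :
    (gS f (n + 1)).leadingCoeff = (gS f n).leadingCoeff * (f n).leadingCoeff := by
  rw [show gS f (n + 1) = gS f n * f n from rfl, lc_mul (gS_ne hf0 n) (hf0 n)]

lemma wS_succ (n : ℕ) : wS f (n + 1) = qS f n * wS f n := by
  rw [wS, wS, qS]
  rw [show gS f (n + 1) = gS f n * f n from rfl]
  rw [show HahnSeries.single (-(f n).order)
      ((gS f n).leadingCoeff * ((gS f n * f n).leadingCoeff)⁻¹) * f n *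
      (HahnSeries.single (-(gS f n).order) ((gS f n).leadingCoeff)⁻¹ * gS f n) =
      (HahnSeries.single (-(f n).order)
        ((gS f n).leadingCoeff * ((gS f n * f n).leadingCoeff)⁻¹) *
       HahnSeries.single (-(gS f n).order) ((gS f n).leadingCoeff)⁻¹) * (gS f n * f n)
    from by ring]
  rw [single_mul_single]
  congr 2
  · rw [order_mul (gS_ne hf0 n) (hf0 n)]; ring_nf
  · rw [mul_comm ((gS f n).leadingCoeff), mul_assoc, mul_inv_cancel₀ (lc_ne hf0 n), mul_one]

lemma qS_ne (n : ℕ) : qS f n ≠ 0 :=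
  mul_ne_zero (single_ne_zero (mul_ne_zero (lc_ne hf0 n)
    (inv_ne_zero (lc_ne hf0 (n + 1))))) (hf0 n)

lemma qS_order (n : ℕ) : (qS f n).order = 0 := by
  rw [qS, order_mul (single_ne_zero (mul_ne_zero (lc_ne hf0 n)
    (inv_ne_zero (lc_ne hf0 (n + 1))))) (hf0 n),
    order_single (mul_ne_zero (lc_ne hf0 n) (inv_ne_zero (lc_ne hf0 (n + 1)))),
    neg_add_cancel]

lemma qS_coeff_zero (n : ℕ) : (qS f n).coeff 0 = 1 := by
  have h0 : (qS f n).coeff 0 = (qS f n).leadingCoeff := by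
    rw [leadingCoeff_eq, qS_order hf0 n]
  rw [h0, qS, lc_mul (single_ne_zero (mul_ne_zero (lc_ne hf0 n)
      (inv_ne_zero (lc_ne hf0 (n + 1))))) (hf0 n), leadingCoeff_of_single,
    gS_lc_succ hf0 n]
  field_simp
  exact div_self (mul_ne_zero (lc_ne hf0 n) (leadingCoeff_ne_zero.mpr (hf0 n)))

lemma qS_coeff_small {p : ℕ} (hfp : ∀ m, InLaurentSeriesPow k p m (f m)) (n : ℕ)
    {i : ℤ} (hi : i < (p : ℤ) ^ n) (hi0 : i ≠ 0) : (qS f n).coeff i = 0 := by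
  by_contra h
  have hmem : i ∈ (qS f n).support := (mem_support _ _).mpr h
  have hdvd : ((p : ℤ)) ^ n ∣ i := by
    have : InLaurentSeriesPow k p n (qS f n) := by
      rw [qS]
      refine inPow_mul (inPow_single _ ?_) (hfp n)
      exact Dvd.dvd.neg_right (order_dvd_of_inPow (hf0 n) (hfp n))
    exact this i hmem
  have hge : (0 : ℤ) ≤ i := by
    have := order_le_of_coeff_ne_zero h
    rwa [qS_order hf0 n] at this
  have : ((p : ℤ)) ^ n ≤ i := Int.le_of_dvd (lt_of_le_of_ne hge (Ne.symm hi0)) hdvd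
  exact absurd hi (not_lt.mpr this)

lemma wS_coeff_stable {p : ℕ} (hp1 : 1 ≤ p) (hfp : ∀ m, InLaurentSeriesPow k p m (f m))
    {n m : ℕ} (hnm : n ≤ m) {i : ℤ} (hi : i < (p : ℤ) ^ n) :
    (wS f m).coeff i = (wS f n).coeff i := by
  induction m with
  | zero => cases Nat.le_zero.mp hnm; rfl
  | succ m ih =>
    rcases Nat.lt_or_ge n (m + 1) with hlt | hge
    · have hnm' : n ≤ m := Nat.lt_succ_iff.mp hlt
      have hpm : i < (p : ℤ) ^ m := lt_of_lt_of_le hi (by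
        exact_mod_cast pow_le_pow_right₀ (by exact_mod_cast hp1) hnm')
      have key : (wS f (m + 1)).coeff i = (wS f m).coeff i := by
        have hdiff : (wS f (m + 1) - wS f m) = (qS f m - 1) * wS f m := by
          rw [sub_mul, one_mul, ← wS_succ hf0 m]
        have hvan : (wS f (m + 1) - wS f m).coeff i = 0 := by
          rw [hdiff]
          refine coeff_mul_vanish (A := (p : ℤ) ^ m) (B := 0) ?_ ?_ i (by linarith)
          · intro j hj
            rw [coeff_sub]
            by_cases hj0 : j = 0
            · subst hj0; rw [qS_coeff_zero hf0 m]; simp [coeff_one]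
            · rw [qS_coeff_small hf0 hfp m hj hj0]; simp [coeff_one, hj0]
          · intro j hj
            exact wS_coeff_neg hf0 m hj
        rw [coeff_sub] at hvan
        exact sub_eq_zero.mp hvan
      rw [key, ih hnm']
    · have : n = m + 1 := le_antisymm hnm hge
      subst this; rfl

lemma u0_coeff {p : ℕ} (hp2 : 2 ≤ p) (hfp : ∀ m, InLaurentSeriesPow k p m (f m))
    (n : ℕ) {i : ℤ} (hi : i < (p : ℤ) ^ n) : (u0 f).coeff i = (wS f n).coeff i := by
  have hp1 : 1 ≤ p := le_trans one_le_two hp2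
  rw [u0, PowerSeries.coeff_coe]
  rcases lt_or_ge i 0 with hneg | hpos
  · rw [if_pos hneg, wS_coeff_neg hf0 n hneg]
  · rw [if_neg (not_lt.mpr hpos), PowerSeries.coeff_mk]
    have hcast : ((i.natAbs : ℤ)) = i := Int.natAbs_of_nonneg hpos
    have hiN : i < (p : ℤ) ^ (i.natAbs + 1) := by
      have h1 : i.natAbs < 2 ^ (i.natAbs + 1) :=
        lt_trans Nat.lt_two_pow_self (Nat.pow_lt_pow_right one_lt_two (Nat.lt_succ_self _))
      have h2 : (2 : ℕ) ^ (i.natAbs + 1) ≤ p ^ (i.natAbs + 1) :=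
        Nat.pow_le_pow_left hp2 _
      calc i = (i.natAbs : ℤ) := hcast.symm
        _ < ((2 : ℕ) ^ (i.natAbs + 1) : ℕ) := by exact_mod_cast h1
        _ ≤ (p : ℤ) ^ (i.natAbs + 1) := by exact_mod_cast h2
    rcases le_total n (i.natAbs + 1) with h | h
    · rw [show ((i.natAbs : ℤ)) = i from hcast]
      exact wS_coeff_stable hf0 hp1 hfp h hi
    · rw [show ((i.natAbs : ℤ)) = i from hcast]
      exact (wS_coeff_stable hf0 hp1 hfp h hiN).symm

lemma u0_ne {p : ℕ} (hp2 : 2 ≤ p) (hfp : ∀ m, InLaurentSeriesPow k p m (f m)) :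
    u0 f ≠ 0 := by
  intro h
  have h0 : (u0 f).coeff 0 = (wS f 0).coeff 0 :=
    u0_coeff hf0 hp2 hfp 0 (by norm_num)
  rw [h, wS_coeff_zero hf0 0] at h0
  simp at h0

lemma wS_inv_coeff_neg (n : ℕ) {j : ℤ} (hj : j < 0) : ((wS f n)⁻¹).coeff j = 0 := by
  have hne := wS_ne hf0 n
  have hinvne : (wS f n)⁻¹ ≠ 0 := inv_ne_zero hne
  have hord : ((wS f n)⁻¹).order = 0 := by
    have h1 : (wS f n * (wS f n)⁻¹).order = 0 := by
      rw [mul_inv_cancel₀ hne, order_one]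
    rw [order_mul hne hinvne, wS_order hf0 n, zero_add] at h1
    exact h1
  exact coeff_eq_zero_of_lt_order (by rw [hord]; exact hj)

lemma Qf_pow {p : ℕ} (hfp : ∀ m, InLaurentSeriesPow k p m (f m)) (n : ℕ) :
    ∀ m, n ≤ m → InLaurentSeriesPow k p n (wS f m * (wS f n)⁻¹) := by
  intro m
  induction m with
  | zero =>
    intro h
    rcases Nat.le_zero.mp h
    rw [mul_inv_cancel₀ (wS_ne hf0 0)]
    exact inPow_one
  | succ m ih =>
    intro h
    rcases Nat.lt_or_ge n (m + 1) with hlt | hge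
    · have hnm : n ≤ m := Nat.lt_succ_iff.mp hlt
      rw [wS_succ hf0 m, mul_assoc]
      refine inPow_mul (inPow_mono hnm ?_) (ih hnm)
      rw [qS]
      exact inPow_mul (inPow_single _ (Dvd.dvd.neg_right
        (order_dvd_of_inPow (hf0 m) (hfp m)))) (hfp m)
    · have : n = m + 1 := le_antisymm h hge
      subst this
      rw [mul_inv_cancel₀ (wS_ne hf0 (m + 1))]
      exact inPow_one

/-- The key fact: the limit `u₀` divided by `w n` lies in `k((t))^{pⁿ}`. -/
lemma r_pow {p : ℕ} (hp2 : 2 ≤ p) (hfp : ∀ m, InLaurentSeriesPow k p m (f m)) (n : ℕ) :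
    InLaurentSeriesPow k p n (u0 f * (wS f n)⁻¹) := by
  intro i hi
  rw [mem_support] at hi
  set m := max n (i.natAbs + 1) with hm
  have hnm : n ≤ m := le_max_left _ _
  have him : i < (p : ℤ) ^ m := by
    have h1 : i.natAbs < 2 ^ (i.natAbs + 1) :=
      lt_trans Nat.lt_two_pow_self (Nat.pow_lt_pow_right one_lt_two (Nat.lt_succ_self _))
    have h2 : (2 : ℕ) ^ (i.natAbs + 1) ≤ p ^ m :=
      le_trans (Nat.pow_le_pow_left hp2 _) (Nat.pow_le_pow_right (by omega) (le_max_right _ _))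
    calc i ≤ (i.natAbs : ℤ) := Int.le_natAbs
      _ < ((2 : ℕ) ^ (i.natAbs + 1) : ℕ) := by exact_mod_cast h1
      _ ≤ (p : ℤ) ^ m := by exact_mod_cast h2
  have hstep : (u0 f * (wS f n)⁻¹).coeff i = (wS f m * (wS f n)⁻¹).coeff i := by
    have hdiff : u0 f * (wS f n)⁻¹ - wS f m * (wS f n)⁻¹ = (u0 f - wS f m) * (wS f n)⁻¹ :=
      (sub_mul _ _ _).symm
    have hvan : ((u0 f - wS f m) * (wS f n)⁻¹).coeff i = 0 := by
      refine coeff_mul_vanish (A := (p : ℤ) ^ m) (B := 0) ?_ ?_ i (by linarith)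
      · intro j hj
        rw [coeff_sub, u0_coeff hf0 hp2 hfp m hj, sub_self]
      · intro j hj
        exact wS_inv_coeff_neg hf0 n hj
    have := congrArg (fun x => HahnSeries.coeff x i) hdiff
    simp only [coeff_sub] at this
    rw [hvan] at this
    exact sub_eq_zero.mp this
  rw [hstep] at hi
  exact Qf_pow hf0 hfp n m hnm i ((mem_support _ _).mpr hi)

end Main

/-! ### Digits -/

variable (f) in
/-- The partial sums `σ n = a 0 + a 1 p + ⋯ + a (n-1) pⁿ⁻¹` of the digit expansion. -/
noncomputable def sigmaS (p : ℕ) : ℕ → ℤ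
  | 0 => 0
  | n + 1 => sigmaS p n +
      ((gS f (n + 1)).order - sigmaS p n) / (p : ℤ) ^ n % (p : ℤ) * (p : ℤ) ^ n

variable (f) in
/-- The digit sequence. -/
noncomputable def aS (p : ℕ) (n : ℕ) : ℕ :=
  (((gS f (n + 1)).order - sigmaS f p n) / (p : ℤ) ^ n % (p : ℤ)).toNat

lemma aS_cast {p : ℕ} (hp : 0 < p) (n : ℕ) :
    ((aS f p n : ℤ)) = ((gS f (n + 1)).order - sigmaS f p n) / (p : ℤ) ^ n % (p : ℤ) :=
  Int.toNat_of_nonneg (Int.emod_nonneg _ (by exact_mod_cast hp.ne'))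

lemma aS_lt {p : ℕ} (hp : 0 < p) (n : ℕ) : aS f p n < p := by
  have h1 := Int.emod_lt_of_pos (((gS f (n + 1)).order - sigmaS f p n) / (p : ℤ) ^ n)
    (show (0 : ℤ) < p by exact_mod_cast hp)
  have h2 := aS_cast (f := f) hp n
  omega

lemma sigmaS_succ {p : ℕ} (hp : 0 < p) (n : ℕ) :
    sigmaS f p (n + 1) = sigmaS f p n + (aS f p n : ℤ) * (p : ℤ) ^ n := by
  rw [sigmaS, aS_cast hp n]

lemma sigmaS_dvd {p : ℕ} (hp : 0 < p) (hf0 : ∀ n, f n ≠ 0)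
    (hfp : ∀ m, InLaurentSeriesPow k p m (f m)) (n : ℕ) :
    (p : ℤ) ^ n ∣ (gS f n).order - sigmaS f p n := by
  induction n with
  | zero => simp [sigmaS, gS, order_one]
  | succ n ih =>
    have hfo : (p : ℤ) ^ n ∣ (f n).order := order_dvd_of_inPow (hf0 n) (hfp n)
    have hvs : (gS f (n + 1)).order = (gS f n).order + (f n).order := gS_order_succ hf0 n
    have h1 : (p : ℤ) ^ n ∣ (gS f (n + 1)).order - sigmaS f p n := by
      rw [hvs, show (gS f n).order + (f n).order - sigmaS f p n =
        ((gS f n).order - sigmaS f p n) + (f n).order from by ring]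
      exact dvd_add ih hfo
    obtain ⟨E, hE⟩ := h1
    have hpn : ((p : ℤ)) ^ n ≠ 0 := by positivity
    have hdiv : ((gS f (n + 1)).order - sigmaS f p n) / (p : ℤ) ^ n = E := by
      rw [hE]; exact Int.mul_ediv_cancel_left _ hpn
    have heq : (gS f (n + 1)).order - sigmaS f p (n + 1) = (p : ℤ) ^ n * (E - E % (p : ℤ)) := by
      rw [sigmaS, hdiv]
      have : (gS f (n + 1)).order - sigmaS f p n = (p : ℤ) ^ n * E := hE
      linarith [this, mul_sub ((p : ℤ) ^ n) E (E % (p : ℤ))]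
    rw [heq, pow_succ]
    refine mul_dvd_mul_left _ ?_
    have : E - E % (p : ℤ) = (p : ℤ) * (E / (p : ℤ)) := by
      have h := Int.mul_ediv_add_emod E (p : ℤ)
      linarith
    rw [this]
    exact Dvd.intro _ rfl

end SLB

/-- **Every stratified line bundle on `k((t))` is isomorphic to `O(α)` for some `α ∈ ℤₚ`.**
For every sequence `(f n)` of units of `k((t))^{pⁿ}` there exist a digit sequence
`(a n)` (with `0 ≤ a n < p`) and units `u n` of `k((t))^{pⁿ}` such that
`f n = u n · t^{aₙ pⁿ} · u (n+1)⁻¹` for all `n`. -/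
theorem stratified_line_bundle_monomial_representative
    (k : Type*) [Field k] [IsAlgClosed k] (p : ℕ) [CharP k p] (hp : 0 < p)
    (f : ℕ → LaurentSeries k)
    (hf : ∀ n, IsUnitLaurentSeriesPow k p n (f n)) :
    ∃ (a : ℕ → ℕ) (u : ℕ → LaurentSeries k),
      (∀ n, a n < p) ∧
      (∀ n, IsUnitLaurentSeriesPow k p n (u n)) ∧
      ∀ n, f n = u n * (tt k) ^ (a n * p ^ n) * (u (n + 1))⁻¹ := by
  classical
  have hp2 : 2 ≤ p := by
    haveI : NeZero p := ⟨hp.ne'⟩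
    exact (CharP.char_is_prime_of_pos k p).out.two_le
  have hf0 : ∀ n, f n ≠ 0 := by
    intro n
    obtain ⟨-, g, -, hg⟩ := hf n
    exact left_ne_zero_of_mul_eq_one hg
  have hfp : ∀ n, InLaurentSeriesPow k p n (f n) := fun n => (hf n).1
  set σ : ℕ → ℤ := SLB.sigmaS f p with hσ
  set a : ℕ → ℕ := SLB.aS f p with ha
  set u : ℕ → LaurentSeries k := fun n =>
    SLB.u0 f * HahnSeries.single (σ n) 1 * (SLB.gS f n)⁻¹ with hu
  have hu0ne : SLB.u0 f ≠ 0 := SLB.u0_ne hf0 hp2 hfp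
  have hune : ∀ n, u n ≠ 0 := fun n =>
    mul_ne_zero (mul_ne_zero hu0ne (HahnSeries.single_ne_zero one_ne_zero))
      (inv_ne_zero (SLB.gS_ne hf0 n))
  -- `u n` lies in the subring
  have hupow : ∀ n, InLaurentSeriesPow k p n (u n) := by
    intro n
    obtain ⟨o, ho⟩ : ∃ o, (SLB.gS f n).order = o := ⟨_, rfl⟩
    obtain ⟨c, hc⟩ : ∃ c, (SLB.gS f n).leadingCoeff = c := ⟨_, rfl⟩
    have hcne : c ≠ 0 := hc ▸ SLB.lc_ne hf0 n
    have hg : SLB.gS f n = HahnSeries.single o c * SLB.wS f n := by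
      rw [SLB.wS, ← mul_assoc, ho, hc, HahnSeries.single_mul_single, add_neg_cancel,
        mul_inv_cancel₀ hcne, HahnSeries.single_zero_one, one_mul]
    have key : u n = (SLB.u0 f * (SLB.wS f n)⁻¹) *
        HahnSeries.single (σ n - o) c⁻¹ := by
      apply mul_right_cancel₀ (SLB.gS_ne hf0 n)
      have lhs : u n * SLB.gS f n = SLB.u0 f * HahnSeries.single (σ n) 1 := by
        rw [hu]
        dsimp only
        rw [mul_assoc, inv_mul_cancel₀ (SLB.gS_ne hf0 n), mul_one]
      rw [lhs]
      conv_rhs => rw [hg]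
      rw [show SLB.u0 f * (SLB.wS f n)⁻¹ *
          HahnSeries.single (σ n - o) c⁻¹ *
          (HahnSeries.single o c * SLB.wS f n) =
          SLB.u0 f * (HahnSeries.single (σ n - o) c⁻¹ *
           HahnSeries.single o c) *
          ((SLB.wS f n)⁻¹ * SLB.wS f n) from by ring]
      rw [HahnSeries.single_mul_single, sub_add_cancel,
        inv_mul_cancel₀ hcne, inv_mul_cancel₀ (SLB.wS_ne hf0 n), mul_one]
    rw [key]
    refine SLB.inPow_mul (SLB.r_pow hf0 hp2 hfp n) (SLB.inPow_single _ ?_)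
    have := SLB.sigmaS_dvd (f := f) hp hf0 hfp n
    rw [show σ n - o = -((SLB.gS f n).order - σ n) from by rw [← ho]; ring]
    exact Dvd.dvd.neg_right this
  -- the identity
  have hid : ∀ n, f n = u n * (tt k) ^ (a n * p ^ n) * (u (n + 1))⁻¹ := by
    intro n
    have hσcast : ((a n * p ^ n : ℕ) : ℤ) = σ (n + 1) - σ n := by
      rw [hσ, SLB.sigmaS_succ hp n]
      push_cast
      ring
    have htt : (tt k) ^ (a n * p ^ n) =
        HahnSeries.single (((a n * p ^ n : ℕ) : ℤ)) (1 : k) := by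
      rw [tt, HahnSeries.single_pow, one_pow, nsmul_eq_mul, mul_one]
    rw [eq_mul_inv_iff_mul_eq₀ (hune (n + 1))]
    rw [htt, hσcast]
    have hg1 : SLB.gS f (n + 1) = SLB.gS f n * f n := rfl
    rw [hu]
    dsimp only
    rw [hg1]
    calc f n * (SLB.u0 f * HahnSeries.single (σ (n + 1)) 1 * (SLB.gS f n * f n)⁻¹)
        = SLB.u0 f * HahnSeries.single (σ (n + 1)) 1 *
            ((SLB.gS f n)⁻¹ * ((f n)⁻¹ * f n)) := by
          rw [mul_inv_rev]; ring
      _ = SLB.u0 f * HahnSeries.single (σ (n + 1)) 1 * (SLB.gS f n)⁻¹ := by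
          rw [inv_mul_cancel₀ (hf0 n), mul_one]
      _ = SLB.u0 f * (HahnSeries.single (σ n) 1 *
            HahnSeries.single (σ (n + 1) - σ n) 1) * (SLB.gS f n)⁻¹ := by
          rw [HahnSeries.single_mul_single, add_sub_cancel, mul_one]
      _ = SLB.u0 f * HahnSeries.single (σ n) 1 * (SLB.gS f n)⁻¹ *
            HahnSeries.single (σ (n + 1) - σ n) 1 := by ring
  refine ⟨a, u, fun n => SLB.aS_lt hp n, ?_, hid⟩
  intro n
  exact ⟨hupow n, (u n)⁻¹, SLB.inPow_inv hp (hune n) (hupow n), mul_inv_cancel₀ (hune n)⟩
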